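/- Let f(x) = sign(wᵀx + b) with w ≠ 0, cost c(x, x') = α‖x' − x‖₂² (α > 0), and best response Δ_f(x) = argmax_{x'} (f(x') − c(x, x')) with f ∈ {−1, 1}. Then Δ_f(x) ≠ x if and only if f(x) = −1 and α · (wᵀx + b)² / ‖w‖₂² < 2. Equivalently, exactly the negatively classified points within Euclidean distance √(2/α) of the hyperplane move. -/

import Mathlib

open scoped RealInnerProductSpace

/-- Exactly the negatively classified points whose minimal cost to the hyperplane is below 2
move: `Δ_f(x) ≠ x ↔ (f(x) = −1 ∧ α (wᵀx + b)²/‖w‖² < 2)`. -/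
theorem stmt_7 {d : ℕ} (w : EuclideanSpace ℝ (Fin d)) (b : ℝ) (α : ℝ)
    (hw : w ≠ 0) (hα : 0 < α)
    (f : EuclideanSpace ℝ (Fin d) → ℝ)
    (hf : ∀ x, f x = if 0 ≤ ⟪w, x⟫ + b then (1 : ℝ) else -1)
    (c : EuclideanSpace ℝ (Fin d) → EuclideanSpace ℝ (Fin d) → ℝ)
    (hc : ∀ x x', c x x' = α * ‖x' - x‖ ^ 2)
    (Δ : EuclideanSpace ℝ (Fin d) → EuclideanSpace ℝ (Fin d))
    -- Δ x attains the maximum of x' ↦ f x' − c x x'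
    (hmax : ∀ x x', f x' - c x x' ≤ f (Δ x) - c x (Δ x))
    -- ties are broken in favor of not moving
    (htie : ∀ x, (∀ x', f x' - c x x' ≤ f x - c x x) → Δ x = x) :
    ∀ x, Δ x ≠ x ↔ (f x = -1 ∧ α * (⟪w, x⟫ + b) ^ 2 / ‖w‖ ^ 2 < 2) := by
  intro x
  have hw0 : (0:ℝ) < ‖w‖ := norm_pos_iff.mpr hw
  have hw2 : (0:ℝ) < ‖w‖ ^ 2 := by positivity
  set t : ℝ := ⟪w, x⟫ + b with ht
  have hcxx : c x x = 0 := by simp [hc]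
  have hfb : ∀ y, f y ≤ 1 := by
    intro y; rw [hf]; split <;> norm_num
  -- case f x = 1 : stay
  have h1 : f x = 1 → Δ x = x := by
    intro h1
    apply htie; intro x'
    have hc' : 0 ≤ c x x' := by rw [hc]; positivity
    have := hfb x'
    rw [h1, hcxx]; linarith
  -- case f x = -1 and cost ≥ 2 : stay
  have h2 : f x = -1 → 2 ≤ α * t ^ 2 / ‖w‖ ^ 2 → Δ x = x := by
    intro hfx hge
    have htneg : t < 0 := by
      by_contra hpos
      push_neg at hpos
      rw [hf, if_pos hpos] at hfx
      norm_num at hfx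
    apply htie; intro x'
    rw [hfx, hcxx, sub_zero, hf x', hc]
    have hge' : 2 * ‖w‖ ^ 2 ≤ α * t ^ 2 := by
      rw [le_div_iff₀ hw2] at hge; linarith
    split_ifs with hpos
    · have hcs : -t ≤ ‖w‖ * ‖x' - x‖ := by
        have h1 : -t ≤ ⟪w, x' - x⟫ := by
          rw [inner_sub_right]; simp only [ht] at *; linarith
        calc -t ≤ ⟪w, x' - x⟫ := h1
          _ ≤ ‖w‖ * ‖x' - x‖ := real_inner_le_norm _ _
      have ht2 : t ^ 2 ≤ ‖w‖ ^ 2 * ‖x' - x‖ ^ 2 := by nlinarith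
      nlinarith [sq_nonneg ‖x' - x‖]
    · have : 0 ≤ α * ‖x' - x‖ ^ 2 := by positivity
      linarith
  constructor
  · intro hne
    by_contra hcon
    push_neg at hcon
    have hfx_cases : f x = 1 ∨ f x = -1 := by
      rw [hf]; split
      · exact Or.inl rfl
      · exact Or.inr rfl
    rcases hfx_cases with h | h
    · exact hne (h1 h)
    · exact hne (h2 h (hcon h))
  · rintro ⟨hfx, hlt⟩ heq
    have htneg : t < 0 := by
      by_contra hpos
      push_neg at hpos
      rw [hf, if_pos hpos] at hfx
      norm_num at hfx
    set x₀ : EuclideanSpace ℝ (Fin d) := x - (t / ‖w‖ ^ 2) • w with hx₀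
    have hin : ⟪w, x₀⟫ + b = 0 := by
      rw [hx₀, inner_sub_right, real_inner_smul_right, real_inner_self_eq_norm_sq,
        div_mul_cancel₀ t (ne_of_gt hw2)]
      simp only [ht]; ring
    have hfx₀ : f x₀ = 1 := by rw [hf, hin]; norm_num
    have hnorm : ‖x₀ - x‖ ^ 2 = t ^ 2 / ‖w‖ ^ 2 := by
      have hd : x₀ - x = -((t / ‖w‖ ^ 2) • w) := by rw [hx₀]; abel
      rw [hd, norm_neg, norm_smul, mul_pow]
      rw [Real.norm_eq_abs, sq_abs]
      field_simp
    have hmx := hmax x x₀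
    rw [heq, hfx₀, hfx, hcxx, hc, hnorm] at hmx
    have hre : α * (t ^ 2 / ‖w‖ ^ 2) = α * t ^ 2 / ‖w‖ ^ 2 := by ring
    rw [hre] at hmx
    linarith
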